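/- Under a multivariate Markov process on a finite rooted tree T with leaf set X, built as a product of k independent two-state Markov processes each of whose transition matrices has non-negative determinant, for any nonempty subset W ⊆ X and any two characters y, z : W → {0,1}^k, the marginal leaf probabilities satisfy p(y)·p(z) ≤ p(y∨z)·p(y∧z), where ∨ and ∧ are taken pointwise and coordinatewise. -/

import Mathlib

open scoped Classical

/-- The probability of a full state assignment `U : V → {0,1}^k` under the multivariate
Markov process built from `k` independent two-state Markov processes on a rooted tree. -/
noncomputable def multiProb {V : Type} [Fintype V] (ρ : V) (A : Finset (V × V)) (k : ℕ)
    (π : Fin k → Fin 2 → ℝ) (P : Fin k → V → V → Matrix (Fin 2) (Fin 2) ℝ)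
    (U : V → Fin k → Fin 2) : ℝ :=
  ∏ j, (π j (U ρ j) * ∏ a ∈ A, P j a.1 a.2 (U a.1 j) (U a.2 j))

open scoped FinsetFamily

lemma matLS (M : Matrix (Fin 2) (Fin 2) ℝ) (hM : ∀ i l, 0 ≤ M i l) (hd : 0 ≤ M.det)
    (a a' b b' : Fin 2) :
    M a b * M a' b' ≤ M (a ⊔ a') (b ⊔ b') * M (a ⊓ a') (b ⊓ b') := by
  rw [Matrix.det_fin_two] at hd
  fin_cases a <;> fin_cases a' <;> fin_cases b <;> fin_cases b' <;>
    simp_all <;> nlinarith [hM.1.1, hM.1.2, hM.2.1, hM.2.2]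

lemma multiProb_nonneg {V : Type} [Fintype V] (ρ : V) (A : Finset (V × V)) (k : ℕ)
    (π : Fin k → Fin 2 → ℝ) (P : Fin k → V → V → Matrix (Fin 2) (Fin 2) ℝ)
    (hπ : ∀ j i, 0 < π j i) (hP : ∀ j, ∀ a ∈ A, ∀ i l, 0 ≤ P j a.1 a.2 i l)
    (U : V → Fin k → Fin 2) : 0 ≤ multiProb ρ A k π P U := by
  refine Finset.prod_nonneg fun j _ => mul_nonneg (hπ j _).le (Finset.prod_nonneg fun a ha => hP j a ha _ _)

lemma multiProb_LS {V : Type} [Fintype V] (ρ : V) (A : Finset (V × V)) (k : ℕ)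
    (π : Fin k → Fin 2 → ℝ) (P : Fin k → V → V → Matrix (Fin 2) (Fin 2) ℝ)
    (hπ : ∀ j i, 0 < π j i) (hP : ∀ j, ∀ a ∈ A, ∀ i l, 0 ≤ P j a.1 a.2 i l)
    (hPdet : ∀ j, ∀ a ∈ A, 0 ≤ (P j a.1 a.2).det)
    (U U' : V → Fin k → Fin 2) :
    multiProb ρ A k π P U * multiProb ρ A k π P U' ≤
      multiProb ρ A k π P (U ⊔ U') * multiProb ρ A k π P (U ⊓ U') := by
  unfold multiProb
  rw [← Finset.prod_mul_distrib, ← Finset.prod_mul_distrib]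
  refine Finset.prod_le_prod (fun j _ => mul_nonneg (mul_nonneg (hπ j _).le
    (Finset.prod_nonneg fun a ha => hP j a ha _ _)) (mul_nonneg (hπ j _).le
    (Finset.prod_nonneg fun a ha => hP j a ha _ _))) fun j _ => ?_
  have hπeq : π j ((U ⊔ U') ρ j) * π j ((U ⊓ U') ρ j) = π j (U ρ j) * π j (U' ρ j) := by
    simp only [Pi.sup_apply, Pi.inf_apply]
    rcases le_total (U ρ j) (U' ρ j) with h | h <;>
      simp [sup_eq_right.2 h, inf_eq_left.2 h, sup_eq_left.2 h, inf_eq_right.2 h, mul_comm]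
  calc (π j (U ρ j) * ∏ a ∈ A, P j a.1 a.2 (U a.1 j) (U a.2 j)) *
        (π j (U' ρ j) * ∏ a ∈ A, P j a.1 a.2 (U' a.1 j) (U' a.2 j))
      = (π j (U ρ j) * π j (U' ρ j)) *
        ((∏ a ∈ A, P j a.1 a.2 (U a.1 j) (U a.2 j)) *
         (∏ a ∈ A, P j a.1 a.2 (U' a.1 j) (U' a.2 j))) := by ring
    _ ≤ (π j (U ρ j) * π j (U' ρ j)) *
        ((∏ a ∈ A, P j a.1 a.2 ((U ⊔ U') a.1 j) ((U ⊔ U') a.2 j)) *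
         (∏ a ∈ A, P j a.1 a.2 ((U ⊓ U') a.1 j) ((U ⊓ U') a.2 j))) := by
        refine mul_le_mul_of_nonneg_left ?_ (mul_nonneg (hπ j _).le (hπ j _).le)
        rw [← Finset.prod_mul_distrib, ← Finset.prod_mul_distrib]
        refine Finset.prod_le_prod (fun a ha => mul_nonneg (hP j a ha _ _) (hP j a ha _ _))
          fun a ha => ?_
        simpa [Pi.sup_apply, Pi.inf_apply] using
          matLS (P j a.1 a.2) (hP j a ha) (hPdet j a ha) (U a.1 j) (U' a.1 j) (U a.2 j) (U' a.2 j)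
    _ = _ := by rw [← hπeq]; ring
/-- Proposition 1: the marginal leaf probabilities of the multivariate Markov process on a
tree are log-supermodular, provided each transition matrix has non-negative determinant. -/
theorem stmt_10 {V : Type} [Fintype V] (ρ : V) (A : Finset (V × V)) (X : Finset V)
    -- tree structure: arcs directed away from the root, `X` is the leaf set
    (hroot : ∀ a ∈ A, a.2 ≠ ρ)
    (hparent : ∀ v : V, v ≠ ρ → ∃! r : V, (r, v) ∈ A)
    (hleaf : ∀ x ∈ X, ∀ a ∈ A, a.1 ≠ x)
    (k : ℕ) (π : Fin k → Fin 2 → ℝ)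
    (hπ : ∀ j i, 0 < π j i) (hπ1 : ∀ j, π j 0 + π j 1 = 1)
    (P : Fin k → V → V → Matrix (Fin 2) (Fin 2) ℝ)
    (hP : ∀ j, ∀ a ∈ A, ∀ i l, 0 ≤ P j a.1 a.2 i l)
    (hProw : ∀ j, ∀ a ∈ A, ∀ i : Fin 2, P j a.1 a.2 i 0 + P j a.1 a.2 i 1 = 1)
    (hPdet : ∀ j, ∀ a ∈ A, 0 ≤ (P j a.1 a.2).det)
    (W : Finset V) (hWX : W ⊆ X) (hW : W.Nonempty)
    (y z : W → Fin k → Fin 2) :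
    (∑ U : V → Fin k → Fin 2, if (∀ v : W, U (v : V) = y v) then multiProb ρ A k π P U else 0) *
      (∑ U : V → Fin k → Fin 2, if (∀ v : W, U (v : V) = z v) then multiProb ρ A k π P U else 0) ≤
    (∑ U : V → Fin k → Fin 2,
        if (∀ v : W, U (v : V) = fun j => max (y v j) (z v j)) then multiProb ρ A k π P U else 0) *
      (∑ U : V → Fin k → Fin 2,
        if (∀ v : W, U (v : V) = fun j => min (y v j) (z v j)) then multiProb ρ A k π P U else 0) := by
  classical
  letI : DecidableEq (V → Fin k → Fin 2) := Classical.decEq _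
  set f₁ : (V → Fin k → Fin 2) → ℝ :=
    fun U => if (∀ v : W, U (v : V) = y v) then multiProb ρ A k π P U else 0 with hf₁
  set f₂ : (V → Fin k → Fin 2) → ℝ :=
    fun U => if (∀ v : W, U (v : V) = z v) then multiProb ρ A k π P U else 0 with hf₂
  set f₃ : (V → Fin k → Fin 2) → ℝ :=
    fun U => if (∀ v : W, U (v : V) = fun j => min (y v j) (z v j)) then multiProb ρ A k π P U
      else 0 with hf₃
  set f₄ : (V → Fin k → Fin 2) → ℝ :=
    fun U => if (∀ v : W, U (v : V) = fun j => max (y v j) (z v j)) then multiProb ρ A k π P U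
      else 0 with hf₄
  have hnn : ∀ U, 0 ≤ multiProb ρ A k π P U := multiProb_nonneg ρ A k π P hπ hP
  have h₁ : (0 : (V → Fin k → Fin 2) → ℝ) ≤ f₁ := fun U => by
    simp only [hf₁]; split <;> simp [hnn U]
  have h₂ : (0 : (V → Fin k → Fin 2) → ℝ) ≤ f₂ := fun U => by
    simp only [hf₂]; split <;> simp [hnn U]
  have h₃ : (0 : (V → Fin k → Fin 2) → ℝ) ≤ f₃ := fun U => by
    simp only [hf₃]; split <;> simp [hnn U]
  have h₄ : (0 : (V → Fin k → Fin 2) → ℝ) ≤ f₄ := fun U => by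
    simp only [hf₄]; split <;> simp [hnn U]
  have key : ∀ a b, f₁ a * f₂ b ≤ f₃ (a ⊓ b) * f₄ (a ⊔ b) := by
    intro a b
    simp only [hf₁, hf₂, hf₃, hf₄]
    by_cases ha : ∀ v : W, a (v : V) = y v
    · by_cases hb : ∀ v : W, b (v : V) = z v
      · have h3 : ∀ v : W, (a ⊓ b) (v : V) = fun j => min (y v j) (z v j) := by
          intro v; funext j
          simp [Pi.inf_apply, ha v, hb v]
        have h4 : ∀ v : W, (a ⊔ b) (v : V) = fun j => max (y v j) (z v j) := by
          intro v; funext j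
          simp [Pi.sup_apply, ha v, hb v]
        rw [if_pos ha, if_pos hb, if_pos h3, if_pos h4, mul_comm (multiProb ρ A k π P (a ⊓ b))]
        exact multiProb_LS ρ A k π P hπ hP hPdet a b
      · rw [if_neg hb, mul_zero]
        exact mul_nonneg (h₃ _) (h₄ _)
    · rw [if_neg ha, zero_mul]
      exact mul_nonneg (h₃ _) (h₄ _)
  have huniv_sups : (Finset.univ : Finset (V → Fin k → Fin 2)) ⊻ Finset.univ = Finset.univ := by
    refine Finset.Subset.antisymm (Finset.subset_univ _) fun U _ => ?_
    exact Finset.mem_sups.2 ⟨U, Finset.mem_univ _, U, Finset.mem_univ _, sup_idem U⟩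
  have huniv_infs : (Finset.univ : Finset (V → Fin k → Fin 2)) ⊼ Finset.univ = Finset.univ := by
    refine Finset.Subset.antisymm (Finset.subset_univ _) fun U _ => ?_
    exact Finset.mem_infs.2 ⟨U, Finset.mem_univ _, U, Finset.mem_univ _, inf_idem U⟩
  have := four_functions_theorem f₁ f₂ f₃ f₄ h₁ h₂ h₃ h₄ key Finset.univ Finset.univ
  rw [huniv_sups, huniv_infs] at this
  linarith [this]
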